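/- Let (X,d) be a metric space and {x_n}_{n≥0} a sequence in X with a positive finite rate of escape R (i.e. d(x_0,x_n)/n → R ∈ (0,∞)) satisfying d(x_{m+k}, x_{n+k}) ≤ d(x_m, x_n) for all k,m,n ≥ 0. Then the sequence is aligned: for every ε > 0 there exists K ∈ ℕ such that for infinitely many n ∈ ℕ, one has e^{-ε} d(x_0,x_k) + d(x_k,x_n) ≤ d(x_0,x_n) for all K ≤ k ≤ n. -/

import Mathlib

open Filter

/-- A sequence is aligned: for each `ε > 0` there is `K` such that for infinitely many `n`,
`x k` lies in the ε-cone `[x 0, x n]_ε` for all `K ≤ k ≤ n`. -/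
def Aligned {X : Type*} [MetricSpace X] (x : ℕ → X) : Prop :=
  ∀ ε > (0 : ℝ), ∃ K : ℕ, ∀ N : ℕ, ∃ n ≥ N,
    ∀ k : ℕ, K ≤ k → k ≤ n →
      Real.exp (-ε) * dist (x 0) (x k) + dist (x k) (x n) ≤ dist (x 0) (x n)

theorem stmt0 {X : Type*} [MetricSpace X] (x : ℕ → X) (R : ℝ)
    (hR : 0 < R)
    (hrate : Tendsto (fun n : ℕ => dist (x 0) (x n) / n) atTop (nhds R))
    (hsemi : ∀ k m n : ℕ, dist (x (m + k)) (x (n + k)) ≤ dist (x m) (x n)) :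
    Aligned x := by
  intro ε hε
  set a : ℕ → ℝ := fun n => dist (x 0) (x n) with ha
  set E : ℝ := Real.exp (-ε) with hE
  have hE0 : 0 < E := Real.exp_pos _
  have hE1 : E < 1 := by
    rw [hE]
    exact Real.exp_lt_one_iff.mpr (by linarith)
  set δ : ℝ := R * (1 - E) / 2 with hδdef
  have hδ : 0 < δ := by
    apply div_pos (mul_pos hR (by linarith)) (by norm_num)
  have hkey : E * (R + δ) ≤ R - δ := by
    rw [hδdef]
    nlinarith [sq_nonneg (1 - E), hR.le, mul_pos hR hE0]
  -- eventual upper bound on a k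
  have hub : ∀ᶠ k in atTop, a k ≤ (R + δ) * k := by
    obtain ⟨N₁, hN₁⟩ := Metric.tendsto_atTop.mp hrate δ hδ
    filter_upwards [eventually_ge_atTop N₁, eventually_ge_atTop 1] with k hk hk1
    have hk0 : (0:ℝ) < (k:ℝ) := by exact_mod_cast hk1
    have hd := hN₁ k hk
    rw [Real.dist_eq, abs_lt] at hd
    have h2 := hd.2
    rw [sub_lt_iff_lt_add, div_lt_iff₀ hk0] at h2
    nlinarith
  obtain ⟨K₀, hK₀⟩ := eventually_atTop.mp hub
  refine ⟨K₀, fun N => ?_⟩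
  -- b tends to infinity
  set b : ℕ → ℝ := fun n => a n - (R - δ) * n with hb
  have hbtop : Tendsto b atTop atTop := by
    have h1 : Tendsto (fun n : ℕ => a n / n - (R - δ)) atTop (nhds δ) := by
      have := hrate.sub_const (R - δ)
      simpa using this
    have h2 : Tendsto (fun n : ℕ => (n : ℝ) * (a n / n - (R - δ))) atTop atTop :=
      Filter.Tendsto.atTop_mul_pos hδ (tendsto_natCast_atTop_atTop (R := ℝ)) h1
    apply h2.congr'
    filter_upwards [eventually_ge_atTop 1] with n hn
    have hn0 : (n:ℝ) ≠ 0 := by positivity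
    field_simp [hb]
    ring
  -- find record time n ≥ N
  have hrec : ∃ n ≥ N, ∀ m ≤ n, b m ≤ b n := by
    set C : ℝ := (Finset.range (N + 1)).sup' (Finset.nonempty_range_add_one) b with hC
    obtain ⟨T₀, hT₀⟩ := eventually_atTop.mp ((tendsto_atTop.mp hbtop) (C + 1))
    set T : ℕ := max T₀ N with hT
    obtain ⟨n, hnmem, hnmax⟩ := Finset.exists_max_image (Finset.range (T + 1)) b
      Finset.nonempty_range_add_one
    have hnT : n ≤ T := Nat.lt_succ_iff.mp (Finset.mem_range.mp hnmem)
    have hbnC : C + 1 ≤ b n := by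
      have hTmem : T ∈ Finset.range (T + 1) := Finset.self_mem_range_succ T
      exact le_trans (hT₀ T (le_max_left _ _)) (hnmax T hTmem)
    have hnN : N ≤ n := by
      by_contra h
      push_neg at h
      have : b n ≤ C := Finset.le_sup' b (Finset.mem_range.mpr (Nat.lt_succ_of_lt h))
      linarith
    exact ⟨n, hnN, fun m hm => hnmax m (Finset.mem_range.mpr (Nat.lt_succ_of_le (hm.trans hnT)))⟩
  obtain ⟨n, hnN, hn⟩ := hrec
  refine ⟨n, hnN, fun k hkK hkn => ?_⟩
  have hak : a k ≤ (R + δ) * k := hK₀ k hkK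
  have hdkn : dist (x k) (x n) ≤ a (n - k) := by
    have := hsemi k 0 (n - k)
    simpa [Nat.sub_add_cancel hkn] using this
  have hbm : b (n - k) ≤ b n := hn (n - k) (Nat.sub_le _ _)
  have hcast : ((n - k : ℕ) : ℝ) = (n : ℝ) - k := Nat.cast_sub hkn
  have hank : a (n - k) ≤ a n - (R - δ) * k := by
    simp only [hb, hcast] at hbm
    linarith
  have hk0 : (0:ℝ) ≤ (k:ℝ) := Nat.cast_nonneg k
  calc E * a k + dist (x k) (x n) ≤ E * ((R + δ) * k) + (a n - (R - δ) * k) := by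
        have := mul_le_mul_of_nonneg_left hak hE0.le
        linarith [hdkn.trans hank]
    _ ≤ a n := by nlinarith [mul_le_mul_of_nonneg_right hkey hk0]
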